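/- arXiv:1402.3955 — 4 statements merged into one kernel-verified Lean document; each statement's English description precedes it below -/
import Mathlib

section
/- For every function h in H^1(ℝ) one has the interpolation inequality ‖h‖_{L^∞(ℝ)} ≤ (9/16)^{1/3} (∫_ℝ |h(x)| dx)^{1/3} (∫_ℝ h'(x)^2 dx)^{1/3}. -/
open MeasureTheory Filter Set Topology


open MeasureTheory Filter Set Topology

/-- derivative of `t ↦ √|t| * t` -/
lemma phi_hasDerivAt (t : ℝ) :
    HasDerivAt (fun s : ℝ => Real.sqrt |s| * s) ((3/2) * Real.sqrt |t|) t := by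
  rcases lt_trichotomy t 0 with ht | rfl | ht
  · have hne : -t ≠ 0 := by linarith
    have h1 : HasDerivAt (fun s : ℝ => Real.sqrt (-s)) (1 / (2 * Real.sqrt (-t)) * (-1)) t :=
      (Real.hasDerivAt_sqrt hne).comp t (hasDerivAt_neg t)
    have h2 : HasDerivAt (fun s : ℝ => Real.sqrt (-s) * s)
        ((1 / (2 * Real.sqrt (-t)) * (-1)) * t + Real.sqrt (-t) * 1) t :=
      h1.mul (hasDerivAt_id t)
    have heq : (fun s : ℝ => Real.sqrt (-s) * s) =ᶠ[nhds t]
        (fun s : ℝ => Real.sqrt |s| * s) := by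
      filter_upwards [eventually_lt_nhds ht] with s hs
      rw [abs_of_neg hs]
    have h3 := h2.congr_of_eventuallyEq heq.symm
    refine h3.congr_deriv (Eq.symm ?_)
    have hs : Real.sqrt (-t) > 0 := Real.sqrt_pos.mpr (by linarith)
    have hsq : Real.sqrt (-t) ^ 2 = -t := Real.sq_sqrt (by linarith)
    rw [abs_of_neg ht]
    field_simp
    nlinarith [hsq]
  · rw [hasDerivAt_iff_tendsto_slope]
    have hcong : ∀ s ∈ ({(0:ℝ)}ᶜ : Set ℝ), Real.sqrt |s| = slope (fun s : ℝ => Real.sqrt |s| * s) 0 s := by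
      intro s hs
      have hs0 : s ≠ 0 := hs
      simp [slope_def_field, div_eq_iff hs0]
      field_simp
    have hbase : Tendsto (fun s : ℝ => Real.sqrt |s|) (nhdsWithin 0 {(0:ℝ)}ᶜ) (nhds 0) := by
      have : Tendsto (fun s : ℝ => Real.sqrt |s|) (nhds 0) (nhds (Real.sqrt |0|)) :=
        (Real.continuous_sqrt.comp continuous_abs).tendsto 0
      simpa using this.mono_left nhdsWithin_le_nhds
    have := hbase.congr' (by filter_upwards [self_mem_nhdsWithin] with s hs using hcong s hs)
    simpa using this
  · have hne : t ≠ 0 := ne_of_gt ht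
    have h1 : HasDerivAt (fun s : ℝ => Real.sqrt s * s)
        ((1 / (2 * Real.sqrt t)) * t + Real.sqrt t * 1) t :=
      (Real.hasDerivAt_sqrt hne).mul (hasDerivAt_id t)
    have heq : (fun s : ℝ => Real.sqrt s * s) =ᶠ[nhds t]
        (fun s : ℝ => Real.sqrt |s| * s) := by
      filter_upwards [eventually_gt_nhds ht] with s hs
      rw [abs_of_pos hs]
    have h3 := h1.congr_of_eventuallyEq heq.symm
    refine h3.congr_deriv (Eq.symm ?_)
    have hs : Real.sqrt t > 0 := Real.sqrt_pos.mpr ht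
    have hsq : Real.sqrt t ^ 2 = t := Real.sq_sqrt ht.le
    rw [abs_of_pos ht]
    field_simp
    nlinarith [hsq]

/-- a nonnegative integrable function with a limit at `atTop` has limit `0`. -/
lemma limit_zero_atTop {f : ℝ → ℝ} (hf : Integrable f) (hnn : ∀ x, 0 ≤ f x) {L : ℝ}
    (hL : Tendsto f atTop (nhds L)) : L = 0 := by
  by_contra hne
  have hL0 : 0 ≤ L := ge_of_tendsto' hL hnn
  have hpos : 0 < L := lt_of_le_of_ne hL0 (Ne.symm hne)
  have hev : ∀ᶠ x in atTop, L/2 ≤ f x := hL.eventually (eventually_ge_nhds (by linarith))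
  obtain ⟨A, hA⟩ := eventually_atTop.mp hev
  have hconst : IntegrableOn (fun _ : ℝ => L/2) (Ici A) volume := by
    apply Integrable.mono' hf.integrableOn aestronglyMeasurable_const
    filter_upwards [ae_restrict_mem measurableSet_Ici] with x hx
    rw [Real.norm_eq_abs, abs_of_pos (by linarith)]
    exact hA x hx
  rw [integrableOn_const_iff] at hconst
  rcases hconst with hc | hc
  · simp at hc; linarith
  · simp [Real.volume_Ici] at hc

/-- **Interpolation inequality.** For every `h ∈ H¹(ℝ)` (encoded as a differentiable
function with derivative `h'`, both square integrable, and `h` integrable),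
`‖h‖_{L^∞} ≤ (9/16)^{1/3} (∫ |h|)^{1/3} (∫ h'²)^{1/3}`.  Since `h` is continuous,
the `L^∞` norm is the pointwise supremum of `|h|`. -/
theorem interpolation_inequality
    (h h' : ℝ → ℝ)
    (hderiv : ∀ x, HasDerivAt h (h' x) x)
    (hmem : MemLp h 2 (volume : Measure ℝ))
    (hmem' : MemLp h' 2 (volume : Measure ℝ))
    (hint : Integrable h) :
    ∀ x : ℝ, |h x| ≤
      ((9 : ℝ)/16) ^ ((1:ℝ)/3) * (∫ y, |h y|) ^ ((1:ℝ)/3) *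
        (∫ y, (h' y) ^ 2) ^ ((1:ℝ)/3) := by
  intro x₀
  have hcont : Continuous h := by
    rw [continuous_iff_continuousAt]; exact fun x => (hderiv x).continuousAt
  -- h² has integrable derivative 2 h h'
  have hsq_deriv : ∀ x, HasDerivAt (fun y => h y ^ 2) (2 * h x * h' x) x := by
    intro x
    have := (hderiv x).fun_pow 2
    simpa [mul_comm, mul_assoc, mul_left_comm] using this
  have hhh' : Integrable (fun x => h x * h' x) := by
    have hsmul : MemLp (h • h') 1 (volume : Measure ℝ) := by
      apply hmem'.smul hmem
    exact memLp_one_iff_integrable.mp hsmul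
  have hsq_deriv_int : Integrable (fun x => 2 * h x * h' x) := by
    have := hhh'.const_mul 2
    simpa [mul_assoc] using this
  have hsq_int : Integrable (fun x => h x ^ 2) :=
    (memLp_two_iff_integrable_sq hmem.aestronglyMeasurable).mp hmem
  -- h² tends to 0 at ±∞
  have key : ∀ x : ℝ, h x ^ 2 = h 0 ^ 2 + ∫ t in (0:ℝ)..x, 2 * h t * h' t := by
    intro x
    have := intervalIntegral.integral_eq_sub_of_hasDerivAt
      (f := fun y => h y ^ 2) (f' := fun t => 2 * h t * h' t) (a := 0) (b := x)
      (fun t _ => hsq_deriv t) (hsq_deriv_int.intervalIntegrable)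
    linarith [this]
  have hsq_top : Tendsto (fun x => h x ^ 2) atTop
      (nhds (h 0 ^ 2 + ∫ t in Ioi (0:ℝ), 2 * h t * h' t)) := by
    have h1 := intervalIntegral_tendsto_integral_Ioi
      (f := fun t => 2 * h t * h' t) (l := atTop) 0 hsq_deriv_int.integrableOn tendsto_id
    have h2 := (tendsto_const_nhds (x := h 0 ^ 2) (f := atTop)).add h1
    refine h2.congr (fun x => ?_)
    rw [key x]
    simp only [id_eq]
  have hsq_bot : Tendsto (fun x => h x ^ 2) atBot
      (nhds (h 0 ^ 2 - ∫ t in Iic (0:ℝ), 2 * h t * h' t)) := by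
    have h1 := intervalIntegral_tendsto_integral_Iic
      (f := fun t => 2 * h t * h' t) (l := atBot) 0 hsq_deriv_int.integrableOn tendsto_id
    have h2 := (tendsto_const_nhds (x := h 0 ^ 2) (f := atBot)).sub h1
    refine h2.congr (fun x => ?_)
    rw [key x, intervalIntegral.integral_symm]
    simp only [id_eq]
    ring
  have hLtop : (h 0 ^ 2 + ∫ t in Ioi (0:ℝ), 2 * h t * h' t) = 0 :=
    limit_zero_atTop hsq_int (fun x => sq_nonneg _) hsq_top
  have hLbot : (h 0 ^ 2 - ∫ t in Iic (0:ℝ), 2 * h t * h' t) = 0 := by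
    have hnegint : Integrable (fun x : ℝ => h (-x) ^ 2) := hsq_int.comp_neg
    have hnegt : Tendsto (fun x : ℝ => h (-x) ^ 2) atTop
        (nhds (h 0 ^ 2 - ∫ t in Iic (0:ℝ), 2 * h t * h' t)) :=
      hsq_bot.comp tendsto_neg_atTop_atBot
    exact limit_zero_atTop hnegint (fun x => sq_nonneg _) hnegt
  have hsq_top0 : Tendsto (fun x => h x ^ 2) atTop (nhds 0) := hLtop ▸ hsq_top
  have hsq_bot0 : Tendsto (fun x => h x ^ 2) atBot (nhds 0) := hLbot ▸ hsq_bot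
  have habs_top : Tendsto h atTop (nhds 0) := by
    rw [tendsto_zero_iff_abs_tendsto_zero]
    have := (Real.continuous_sqrt.tendsto 0).comp hsq_top0
    simpa [Function.comp_def, Real.sqrt_sq_eq_abs] using this
  have habs_bot : Tendsto h atBot (nhds 0) := by
    rw [tendsto_zero_iff_abs_tendsto_zero]
    have := (Real.continuous_sqrt.tendsto 0).comp hsq_bot0
    simpa [Function.comp_def, Real.sqrt_sq_eq_abs] using this
  -- the function G = √|h| · h
  set G : ℝ → ℝ := fun x => Real.sqrt |h x| * h x with hGdef
  set G' : ℝ → ℝ := fun x => 3/2 * Real.sqrt |h x| * h' x with hG'def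
  have hGderiv : ∀ x, HasDerivAt G (G' x) x := by
    intro x
    have := (phi_hasDerivAt (h x)).comp x (hderiv x)
    simpa [hGdef, hG'def, Function.comp_def, mul_assoc] using this
  have hphicont : Continuous fun t : ℝ => Real.sqrt |t| * t :=
    (Real.continuous_sqrt.comp continuous_abs).mul continuous_id
  have hGtop : Tendsto G atTop (nhds 0) := by
    have := (hphicont.tendsto 0).comp habs_top
    simpa [hGdef, Function.comp_def] using this
  have hGbot : Tendsto G atBot (nhds 0) := by
    have := (hphicont.tendsto 0).comp habs_bot
    simpa [hGdef, Function.comp_def] using this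
  -- integrability of G'
  have hsqrtmem : MemLp (fun x => Real.sqrt |h x|) 2 (volume : Measure ℝ) := by
    apply (memLp_two_iff_integrable_sq
      ((Real.continuous_sqrt.comp (continuous_abs.comp hcont)).aestronglyMeasurable)).mpr
    have heq : ∀ x : ℝ, Real.sqrt |h x| ^ 2 = |h x| := fun x => Real.sq_sqrt (abs_nonneg _)
    simpa [Function.comp_def, heq] using hint.abs
  have hG'int : Integrable G' := by
    have hsmul : MemLp ((fun x => Real.sqrt |h x|) • h') 1 (volume : Measure ℝ) := by
      apply hmem'.smul hsqrtmem
    have h1 : Integrable (fun x => Real.sqrt |h x| * h' x) := memLp_one_iff_integrable.mp hsmul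
    have := h1.const_mul (3/2)
    simpa [hG'def, mul_assoc] using this
  -- FTC on both half-lines
  have hIoi : ∫ t in Ioi x₀, G' t = 0 - G x₀ :=
    integral_Ioi_of_hasDerivAt_of_tendsto' (fun t _ => hGderiv t) hG'int.integrableOn hGtop
  have hIic : ∫ t in Iic x₀, G' t = G x₀ - 0 :=
    integral_Iic_of_hasDerivAt_of_tendsto' (fun t _ => hGderiv t) hG'int.integrableOn hGbot
  -- 2 |G x₀| ≤ ∫ |G'|
  have habsint : Integrable (fun x => |G' x|) := hG'int.abs
  have htwo : 2 * |G x₀| ≤ ∫ t, |G' t| := by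
    have h1 : |G x₀| ≤ ∫ t in Iic x₀, |G' t| := by
      calc |G x₀| = |∫ t in Iic x₀, G' t| := by rw [hIic]; congr 1; ring
        _ ≤ ∫ t in Iic x₀, |G' t| := by
            simpa [Real.norm_eq_abs] using
              norm_integral_le_integral_norm (μ := volume.restrict (Iic x₀)) G'
    have h2 : |G x₀| ≤ ∫ t in Ioi x₀, |G' t| := by
      calc |G x₀| = |∫ t in Ioi x₀, G' t| := by rw [hIoi]; rw [abs_sub_comm]; simp
        _ ≤ ∫ t in Ioi x₀, |G' t| := by
            simpa [Real.norm_eq_abs] using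
              norm_integral_le_integral_norm (μ := volume.restrict (Ioi x₀)) G'
    have h3 : (∫ t in Iic x₀, |G' t|) + ∫ t in Ioi x₀, |G' t| = ∫ t, |G' t| :=
      intervalIntegral.integral_Iic_add_Ioi habsint.integrableOn habsint.integrableOn
    linarith
  -- Hölder
  have hsqrtmem' : MemLp (fun x => Real.sqrt |h x|) (ENNReal.ofReal 2) (volume : Measure ℝ) := by
    convert hsqrtmem using 2; norm_num
  have habsmem' : MemLp (fun x => |h' x|) (ENNReal.ofReal 2) (volume : Measure ℝ) := by
    have := hmem'.abs
    convert this using 2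
    · norm_num
    · norm_num
  have hconj : Real.HolderConjugate 2 2 := Real.HolderConjugate.two_two
  have hholder : ∫ t, Real.sqrt |h t| * |h' t| ≤
      (∫ t, Real.sqrt |h t| ^ (2:ℝ)) ^ ((1:ℝ)/2) * (∫ t, |h' t| ^ (2:ℝ)) ^ ((1:ℝ)/2) :=
    integral_mul_le_Lp_mul_Lq_of_nonneg hconj
      (Filter.Eventually.of_forall fun t => Real.sqrt_nonneg _)
      (Filter.Eventually.of_forall fun t => abs_nonneg _) hsqrtmem' habsmem'
  -- rewrite the Hölder bound
  set A : ℝ := ∫ y, |h y| with hAdef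
  set B : ℝ := ∫ y, (h' y) ^ 2 with hBdef
  have hA0 : 0 ≤ A := integral_nonneg fun y => abs_nonneg _
  have hB0 : 0 ≤ B := integral_nonneg fun y => sq_nonneg _
  have e1 : (∫ t, Real.sqrt |h t| ^ (2:ℝ)) = A := by
    rw [hAdef]
    apply integral_congr_ae
    filter_upwards with t
    rw [show (2:ℝ) = ((2:ℕ):ℝ) by norm_num, Real.rpow_natCast]
    exact Real.sq_sqrt (abs_nonneg _)
  have e2 : (∫ t, |h' t| ^ (2:ℝ)) = B := by
    rw [hBdef]
    apply integral_congr_ae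
    filter_upwards with t
    rw [show (2:ℝ) = ((2:ℕ):ℝ) by norm_num, Real.rpow_natCast, sq_abs]
  rw [e1, e2] at hholder
  -- ∫ |G'| = 3/2 ∫ √|h| |h'|
  have habs_eq : ∀ t : ℝ, |G' t| = 3/2 * (Real.sqrt |h t| * |h' t|) := by
    intro t
    rw [hG'def]
    simp only [abs_mul, abs_of_nonneg (Real.sqrt_nonneg _),
      abs_of_nonneg (by norm_num : (0:ℝ) ≤ 3/2)]
    ring
  have hGint_eq : (∫ t, |G' t|) = 3/2 * ∫ t, Real.sqrt |h t| * |h' t| := by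
    rw [← integral_const_mul]
    exact integral_congr_ae (Filter.Eventually.of_forall fun t => habs_eq t)
  -- conclude: |G x₀| ≤ 3/4 √A √B
  have hGbound : |G x₀| ≤ 3/4 * (A ^ ((1:ℝ)/2) * B ^ ((1:ℝ)/2)) := by
    have := htwo
    rw [hGint_eq] at this
    nlinarith [hholder]
  -- final algebra
  set M : ℝ := |h x₀| with hMdef
  have hGval : |G x₀| = Real.sqrt M * M := by
    rw [hGdef]
    simp only [abs_mul, abs_of_nonneg (Real.sqrt_nonneg _), hMdef, abs_abs]
  have hM0 : 0 ≤ M := abs_nonneg _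
  have hs2 : Real.sqrt M ^ 2 = M := Real.sq_sqrt hM0
  have ha0 : 0 ≤ A ^ ((1:ℝ)/2) := Real.rpow_nonneg hA0 _
  have hb0 : 0 ≤ B ^ ((1:ℝ)/2) := Real.rpow_nonneg hB0 _
  have ha2 : (A ^ ((1:ℝ)/2)) ^ 2 = A := by
    rw [← Real.rpow_natCast (A ^ ((1:ℝ)/2)) 2, ← Real.rpow_mul hA0]
    norm_num
  have hb2 : (B ^ ((1:ℝ)/2)) ^ 2 = B := by
    rw [← Real.rpow_natCast (B ^ ((1:ℝ)/2)) 2, ← Real.rpow_mul hB0]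
    norm_num
  have hkey : Real.sqrt M * M ≤ 3/4 * (A ^ ((1:ℝ)/2) * B ^ ((1:ℝ)/2)) :=
    hGval ▸ hGbound
  have h0 : 0 ≤ Real.sqrt M * M := mul_nonneg (Real.sqrt_nonneg _) hM0
  have hsq2 : (Real.sqrt M * M) ^ 2 ≤ (3/4 * (A ^ ((1:ℝ)/2) * B ^ ((1:ℝ)/2))) ^ 2 :=
    pow_le_pow_left₀ h0 hkey 2
  have l1 : (Real.sqrt M * M) ^ 2 = M ^ (3:ℕ) := by rw [mul_pow, hs2]; ring
  have l2 : (3/4 * (A ^ ((1:ℝ)/2) * B ^ ((1:ℝ)/2))) ^ 2 = 9/16 * A * B := by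
    rw [mul_pow, mul_pow, ha2, hb2]; ring
  have h3 : M ^ (3:ℕ) ≤ 9/16 * A * B := by rw [← l1, ← l2]; exact hsq2
  have hMrw : M = (M ^ (3:ℕ)) ^ ((1:ℝ)/3) := by
    rw [← Real.rpow_natCast M 3, ← Real.rpow_mul hM0]
    norm_num
  calc M = (M ^ (3:ℕ)) ^ ((1:ℝ)/3) := hMrw
    _ ≤ (9/16 * A * B) ^ ((1:ℝ)/3) :=
        Real.rpow_le_rpow (by positivity) h3 (by norm_num)
    _ = ((9:ℝ)/16) ^ ((1:ℝ)/3) * A ^ ((1:ℝ)/3) * B ^ ((1:ℝ)/3) := by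
        rw [Real.mul_rpow (by positivity) hB0, Real.mul_rpow (by norm_num) hA0]
end

section
/- Among all even, nonnegative functions h ∈ H^1(ℝ) with h(0) = sup h = 1, ∫_ℝ h = 1, and h non-increasing on [0,∞), the function g(x) = (1 - |x|/x₀)² for |x| ≤ x₀ and g(x)=0 otherwise, with x₀ = 3/2, minimizes ∫_ℝ h'² dx; moreover for every h in this class, ∫_ℝ h'² dx ≥ ∫_ℝ g'² dx = 16/9. -/
open MeasureTheory Set

lemma aux_vsq : (∫ x in (0:ℝ)..(3/2), (1 - 2*x/3)^2) = 1/2 := by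
  have hF : ∀ x:ℝ, HasDerivAt (fun x:ℝ => -(1/2)*(1-2*x/3)^3) ((1-2*x/3)^2) x := by
    intro x
    have h1 : HasDerivAt (fun x:ℝ => 1-2*x/3) (-(2/3)) x := by
      exact ((hasDerivAt_const x (1:ℝ)).sub (((hasDerivAt_id x).const_mul (2:ℝ)).div_const 3)).congr_deriv (by norm_num)
    have := (h1.pow 3).const_mul (-(1/2):ℝ)
    exact this.congr_deriv (by ring)
  rw [intervalIntegral.integral_eq_sub_of_hasDerivAt (fun x _ => hF x)
    (Continuous.intervalIntegrable (by fun_prop) _ _)]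
  norm_num

lemma aux_vsq_neg : (∫ x in (-(3/2):ℝ)..0, (1 + 2*x/3)^2) = 1/2 := by
  have hF : ∀ x:ℝ, HasDerivAt (fun x:ℝ => (1/2)*(1+2*x/3)^3) ((1+2*x/3)^2) x := by
    intro x
    have h1 : HasDerivAt (fun x:ℝ => 1+2*x/3) (2/3) x := by
      exact ((hasDerivAt_const x (1:ℝ)).add (((hasDerivAt_id x).const_mul (2:ℝ)).div_const 3)).congr_deriv (by norm_num)
    have := (h1.pow 3).const_mul ((1/2):ℝ)
    exact this.congr_deriv (by ring)
  rw [intervalIntegral.integral_eq_sub_of_hasDerivAt (fun x _ => hF x)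
    (Continuous.intervalIntegrable (by fun_prop) _ _)]
  norm_num

lemma aux_g_integral :
    (∫ x in (-(3/2 : ℝ))..(3/2 : ℝ),
        (4 / ((3:ℝ)/2) ^ 2) * (1 - |x| / ((3:ℝ)/2)) ^ 2) = 16/9 := by
  have hc : Continuous (fun x:ℝ => (4 / ((3:ℝ)/2) ^ 2) * (1 - |x| / ((3:ℝ)/2)) ^ 2) := by
    fun_prop
  have e1 : (∫ x in (0:ℝ)..(3/2),
      (4 / ((3:ℝ)/2) ^ 2) * (1 - |x| / ((3:ℝ)/2)) ^ 2) = 8/9 := by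
    rw [intervalIntegral.integral_congr (g := fun x:ℝ => (16/9)*(1-2*x/3)^2)
      (fun x hx => by
        rw [uIcc_of_le (by norm_num)] at hx
        rw [abs_of_nonneg hx.1]
        ring)]
    rw [intervalIntegral.integral_const_mul, aux_vsq]
    norm_num
  have e2 : (∫ x in (-(3/2):ℝ)..0,
      (4 / ((3:ℝ)/2) ^ 2) * (1 - |x| / ((3:ℝ)/2)) ^ 2) = 8/9 := by
    rw [intervalIntegral.integral_congr (g := fun x:ℝ => (16/9)*(1+2*x/3)^2)
      (fun x hx => by
        rw [uIcc_of_le (by norm_num)] at hx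
        rw [abs_of_nonpos hx.2]
        ring)]
    rw [intervalIntegral.integral_const_mul, aux_vsq_neg]
    norm_num
  rw [← intervalIntegral.integral_add_adjacent_intervals (a := (-(3/2):ℝ)) (b := 0)
      (c := (3/2:ℝ)) (hc.intervalIntegrable _ _) (hc.intervalIntegrable _ _), e1, e2]
  norm_num


/-- Among all even, nonnegative functions `h ∈ H¹(ℝ)` with `h 0 = sup h = 1`,
`∫ h = 1`, non-increasing on `[0,∞)`, the function
`g x = (1 - |x|/x₀)²` for `|x| ≤ x₀` (with `x₀ = 3/2`), `g = 0` otherwise,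
minimizes `∫ h'²`; in particular `∫ h'² ≥ ∫ g'² = 16/9`.
The derivative of `g` on `(-x₀, x₀)` satisfies `g'(x)² = (4/x₀²)(1-|x|/x₀)²`. -/
theorem min_dirichlet_in_class
    (h h' : ℝ → ℝ)
    (hderiv : ∀ x, HasDerivAt h (h' x) x)
    (hmem' : MemLp h' 2 (volume : Measure ℝ))
    (hnonneg : ∀ x, 0 ≤ h x)
    (heven : ∀ x, h (-x) = h x)
    (h0 : h 0 = 1)
    (hsup : ∀ x, h x ≤ 1)
    (hvol : (∫ x, h x) = 1)
    (hmono : AntitoneOn h (Ici (0:ℝ))) :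
    (∫ x in (-(3/2 : ℝ))..(3/2 : ℝ),
        (4 / ((3:ℝ)/2) ^ 2) * (1 - |x| / ((3:ℝ)/2)) ^ 2) = 16/9 ∧
    (16 : ℝ)/9 ≤ ∫ x, (h' x) ^ 2 := by
  refine ⟨aux_g_integral, ?_⟩
  -- continuity and integrability of h
  have hconth : Continuous h := by
    rw [continuous_iff_continuousAt]; exact fun x => (hderiv x).continuousAt
  have hInth : Integrable h := by
    by_contra hc
    rw [integral_undef hc] at hvol
    norm_num at hvol
  -- h' is odd
  have hodd : ∀ x, h' (-x) = - h' x := by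
    intro x
    have h1 : HasDerivAt (fun y => h (-y)) (h' (-x) * (-1)) x :=
      (hderiv (-x)).comp x (hasDerivAt_neg x)
    have h2 : (fun y => h (-y)) = h := funext heven
    rw [h2] at h1
    have := h1.unique (hderiv x)
    linarith
  -- interval integrability of h'
  have hII : ∀ b c : ℝ, IntervalIntegrable h' volume b c := by
    intro b c
    rw [intervalIntegrable_iff]
    have hmr : MemLp h' 2 (volume.restrict (uIoc b c)) := hmem'.restrict _
    haveI : IsFiniteMeasure (volume.restrict (uIoc b c)) :=
      ⟨by rw [Measure.restrict_apply_univ]; exact measure_Ioc_lt_top⟩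
    exact hmr.integrable one_le_two
  have hIIsq : ∀ b c : ℝ, IntervalIntegrable (fun x => h' x ^ 2) volume b c :=
    fun b c => hmem'.integrable_sq.intervalIntegrable
  have hvcont : Continuous (fun x:ℝ => 1 - 2*x/3) := by fun_prop
  have hvd : ∀ x:ℝ, HasDerivAt (fun x:ℝ => 1-2*x/3) (-(2/3)) x := by
    intro x
    exact ((hasDerivAt_const x (1:ℝ)).sub (((hasDerivAt_id x).const_mul (2:ℝ)).div_const 3)).congr_deriv (by norm_num)
  -- integration by parts
  have ibp : (∫ x in (0:ℝ)..(3/2), (h' x * (1-2*x/3) + h x * (-(2/3))))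
      = h (3/2) * (1-2*(3/2)/3) - h 0 * (1-2*(0:ℝ)/3) :=
    intervalIntegral.integral_deriv_mul_eq_sub (fun x _ => hderiv x) (fun x _ => hvd x)
      (hII 0 (3/2)) (intervalIntegrable_const)
  have ibp' : (∫ x in (0:ℝ)..(3/2), (h' x * (1-2*x/3) + h x * (-(2/3)))) = -1 := by
    rw [ibp, h0]; norm_num
  set I : ℝ := ∫ x in (0:ℝ)..(3/2), h x with hIdef
  have hIIhv : IntervalIntegrable (fun x => h' x * (1-2*x/3)) volume 0 (3/2) :=
    (hII 0 (3/2)).mul_continuousOn hvcont.continuousOn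
  have hIv : (∫ x in (0:ℝ)..(3/2), h' x * (1-2*x/3)) = -1 + (2/3)*I := by
    have hsplit := intervalIntegral.integral_add hIIhv
      ((hconth.intervalIntegrable 0 (3/2)).mul_const (-(2/3)))
    rw [ibp'] at hsplit
    have : (∫ x in (0:ℝ)..(3/2), h x * (-(2/3))) = I * (-(2/3)) := by
      rw [intervalIntegral.integral_mul_const]
    rw [this] at hsplit
    linarith
  -- bound on I
  have hIb : I ≤ 1/2 := by
    have hrefl : (∫ x in (-(3/2):ℝ)..0, h x) = I := by
      have hcn := intervalIntegral.integral_comp_neg (a := (0:ℝ)) (b := (3/2:ℝ)) (f := h)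
      simp only [heven, neg_zero] at hcn
      rw [← hcn]
    have hadj : (∫ x in (-(3/2):ℝ)..(3/2), h x) = 2*I := by
      rw [← intervalIntegral.integral_add_adjacent_intervals (a := (-(3/2):ℝ)) (b := 0)
        (c := (3/2:ℝ)) (hconth.intervalIntegrable _ _) (hconth.intervalIntegrable _ _),
        hrefl]
      ring
    have hle : (∫ x in (-(3/2):ℝ)..(3/2), h x) ≤ 1 := by
      rw [intervalIntegral.integral_of_le (by norm_num)]
      calc (∫ x in Ioc (-(3/2):ℝ) (3/2), h x) ≤ ∫ x, h x :=
            setIntegral_le_integral hInth (ae_of_all _ hnonneg)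
        _ = 1 := hvol
    linarith
  -- completing the square
  have hIIlhs : IntervalIntegrable
      (fun x => (-(8/3)) * (h' x * (1-2*x/3)) - (16/9)*(1-2*x/3)^2) volume 0 (3/2) :=
    (hIIhv.const_mul _).sub (Continuous.intervalIntegrable (by fun_prop) _ _)
  have hptwise : ∀ x ∈ Icc (0:ℝ) (3/2),
      (-(8/3)) * (h' x * (1-2*x/3)) - (16/9)*(1-2*x/3)^2 ≤ h' x ^ 2 := by
    intro x _
    nlinarith [sq_nonneg (h' x + (4/3)*(1-2*x/3))]
  have hmono2 : (∫ x in (0:ℝ)..(3/2),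
        ((-(8/3)) * (h' x * (1-2*x/3)) - (16/9)*(1-2*x/3)^2))
      ≤ ∫ x in (0:ℝ)..(3/2), h' x ^ 2 :=
    intervalIntegral.integral_mono_on (by norm_num) hIIlhs (hIIsq 0 (3/2)) hptwise
  have hlhs : (∫ x in (0:ℝ)..(3/2),
        ((-(8/3)) * (h' x * (1-2*x/3)) - (16/9)*(1-2*x/3)^2)) = 8/3 - (16/9)*I - 8/9 := by
    rw [intervalIntegral.integral_sub (hIIhv.const_mul _)
        (Continuous.intervalIntegrable (by fun_prop) _ _),
      intervalIntegral.integral_const_mul, intervalIntegral.integral_const_mul,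
      hIv, aux_vsq]
    ring
  have hhalf : (8:ℝ)/9 ≤ ∫ x in (0:ℝ)..(3/2), h' x ^ 2 := by
    rw [hlhs] at hmono2
    linarith
  -- doubling
  have hsqrefl : (∫ x in (-(3/2):ℝ)..0, h' x ^ 2) = ∫ x in (0:ℝ)..(3/2), h' x ^ 2 := by
    have hcn := intervalIntegral.integral_comp_neg (a := (0:ℝ)) (b := (3/2:ℝ))
      (f := fun x => h' x ^ 2)
    simp only [hodd, neg_zero, neg_sq] at hcn
    rw [← hcn]
  have hadj2 : (∫ x in (-(3/2):ℝ)..(3/2), h' x ^ 2)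
      = 2 * ∫ x in (0:ℝ)..(3/2), h' x ^ 2 := by
    rw [← intervalIntegral.integral_add_adjacent_intervals (a := (-(3/2):ℝ)) (b := 0)
      (c := (3/2:ℝ)) (hIIsq _ _) (hIIsq _ _), hsqrefl]
    ring
  have hfinal : (∫ x in (-(3/2):ℝ)..(3/2), h' x ^ 2) ≤ ∫ x, h' x ^ 2 := by
    rw [intervalIntegral.integral_of_le (by norm_num)]
    exact setIntegral_le_integral hmem'.integrable_sq (ae_of_all _ (fun x => sq_nonneg _))
  linarith
end

section
/- Let L > 0, V > 0, and h_min := (V/L) · χ_{[0,L]}, the minimizer of the total variation ∫_ℝ |h'| among nonnegative BV functions h with ∫_ℝ h = ∫_0^L h = V. Then for every Lipschitz function h ≥ 0 with ∫_ℝ h = ∫_0^L h = V, one has ∫_ℝ |h'| dx − 2V/L ≥ (1/L) ∫_ℝ |h − h_min| dx. -/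
open MeasureTheory Set

/-- **Quantitative stability of the rectangular minimizer (large slope).**
Let `L, V > 0` and `hmin = (V/L)·χ_{[0,L]}`, whose total variation is `2V/L` and
which minimizes the total variation among nonnegative functions with
`∫_ℝ h = ∫_0^L h = V`.  Then for every Lipschitz `h ≥ 0` (with classical
derivative `h'`) satisfying the same constraints,
`∫_ℝ |h'| - 2V/L ≥ (1/L) ∫_ℝ |h - hmin|`. -/
theorem quantitative_rectangle
    (L V : ℝ) (hL : 0 < L) (hV : 0 < V)
    (h h' : ℝ → ℝ)
    (hlip : ∃ K : NNReal, LipschitzWith K h)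
    (hderiv : ∀ x, HasDerivAt h (h' x) x)
    (hint' : Integrable h')
    (hnonneg : ∀ x, 0 ≤ h x)
    (hint : Integrable h)
    (hvolR : (∫ x, h x) = V)
    (hvolL : (∫ x in Icc (0:ℝ) L, h x) = V) :
    (∫ x, |h' x|) - 2 * V / L
      ≥ (1 / L) * ∫ x, |h x - Set.indicator (Icc (0:ℝ) L) (fun _ => V / L) x| := by
  obtain ⟨K, hK⟩ := hlip
  have hcont : Continuous h := hK.continuous
  have hIcc : MeasurableSet (Icc (0:ℝ) L) := measurableSet_Icc
  -- the integral of h over the complement of [0,L] is zero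
  have hcompl : (∫ x in (Icc (0:ℝ) L)ᶜ, h x) = 0 := by
    have := integral_add_compl hIcc hint
    rw [hvolL, hvolR] at this
    linarith
  -- hence h = 0 a.e. on the complement
  have hae : h =ᵐ[volume.restrict (Icc (0:ℝ) L)ᶜ] 0 := by
    refine (integral_eq_zero_iff_of_nonneg_ae ?_ hint.integrableOn).mp hcompl
    exact Filter.Eventually.of_forall hnonneg
  -- pointwise vanishing at the endpoints
  have h0 : h 0 = 0 := by
    have h1 : h =ᵐ[volume.restrict (Iic (0:ℝ))] 0 := by
      rw [← Measure.restrict_congr_set Iio_ae_eq_Iic]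
      refine ae_restrict_of_ae_restrict_of_subset ?_ hae
      intro x hx
      simp only [mem_compl_iff, mem_Icc, not_and, not_le]
      intro hx0; exact absurd hx0 (not_le.mpr hx)
    have := Measure.eqOn_of_ae_eq h1 hcont.continuousOn continuousOn_const
      (by rw [interior_Iic, closure_Iio])
    exact this (by simp : (0:ℝ) ∈ Iic (0:ℝ))
  have hLz : h L = 0 := by
    have h1 : h =ᵐ[volume.restrict (Ici L)] 0 := by
      rw [← Measure.restrict_congr_set Ioi_ae_eq_Ici]
      refine ae_restrict_of_ae_restrict_of_subset ?_ hae
      intro x hx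
      simp only [mem_compl_iff, mem_Icc, not_and, not_le]
      intro _; exact hx
    have := Measure.eqOn_of_ae_eq h1 hcont.continuousOn continuousOn_const
      (by rw [interior_Ici, closure_Ioi])
    exact this (by simp : L ∈ Ici L)
  -- the maximum of h on [0,L]
  obtain ⟨c, hc, hcmax⟩ := isCompact_Icc.exists_isMaxOn (nonempty_Icc.mpr hL.le)
    hcont.continuousOn
  have hcmax' : ∀ x ∈ Icc (0:ℝ) L, h x ≤ h c := hcmax
  have hc0 : (0:ℝ) ≤ c := hc.1
  have hcL : c ≤ L := hc.2
  -- the maximum is at least V/L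
  have hMge : V ≤ h c * L := by
    have h1 : (∫ x in Icc (0:ℝ) L, h x) ≤ ∫ x in Icc (0:ℝ) L, (fun _ => h c) x :=
      setIntegral_mono_on hint.integrableOn (integrableOn_const (by simp [Real.volume_Icc])) hIcc hcmax'
    rw [hvolL, setIntegral_const, Real.volume_real_Icc_of_le hL.le, smul_eq_mul] at h1
    rw [sub_zero] at h1
    linarith [h1]
  -- FTC bounds: total variation is at least 2 * h c
  have hii : ∀ a b : ℝ, IntervalIntegrable h' volume a b := fun a b =>
    hint'.intervalIntegrable
  have hii' : ∀ a b : ℝ, IntervalIntegrable (fun x => |h' x|) volume a b := fun a b =>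
    hint'.abs.intervalIntegrable
  have ftc1 : (∫ x in (0:ℝ)..c, h' x) = h c - h 0 :=
    intervalIntegral.integral_eq_sub_of_hasDerivAt (fun x _ => hderiv x) (hii 0 c)
  have ftc2 : (∫ x in c..L, h' x) = h L - h c :=
    intervalIntegral.integral_eq_sub_of_hasDerivAt (fun x _ => hderiv x) (hii c L)
  have e1 : h c ≤ ∫ x in (0:ℝ)..c, |h' x| := by
    have := intervalIntegral.abs_integral_le_integral_abs (f := h') (μ := volume) hc0
    rw [ftc1, h0, sub_zero] at this
    exact (le_abs_self _).trans this
  have e2 : h c ≤ ∫ x in c..L, |h' x| := by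
    have := intervalIntegral.abs_integral_le_integral_abs (f := h') (μ := volume) hcL
    rw [ftc2, hLz, zero_sub, abs_neg] at this
    exact (le_abs_self _).trans this
  have e3 : (∫ x in (0:ℝ)..c, |h' x|) + (∫ x in c..L, |h' x|) = ∫ x in (0:ℝ)..L, |h' x| :=
    intervalIntegral.integral_add_adjacent_intervals (hii' 0 c) (hii' c L)
  have e4 : (∫ x in (0:ℝ)..L, |h' x|) ≤ ∫ x, |h' x| := by
    rw [intervalIntegral.integral_of_le hL.le]
    exact setIntegral_le_integral hint'.abs
      (Filter.Eventually.of_forall fun x => abs_nonneg _)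
  have hTV : 2 * h c ≤ ∫ x, |h' x| := by linarith
  -- decompose the L¹ distance
  set g : ℝ → ℝ := fun x => |h x - Set.indicator (Icc (0:ℝ) L) (fun _ => V / L) x|
  have hindint : Integrable (Set.indicator (Icc (0:ℝ) L) (fun _ => V / L)) := by
    rw [integrable_indicator_iff hIcc]
    exact integrableOn_const (by simp [Real.volume_Icc])
  have hgint : Integrable g := (hint.sub hindint).abs
  have hsplit : (∫ x, g x) = (∫ x in Icc (0:ℝ) L, g x) + ∫ x in (Icc (0:ℝ) L)ᶜ, g x :=
    (integral_add_compl hIcc hgint).symm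
  have houter : (∫ x in (Icc (0:ℝ) L)ᶜ, g x) = 0 := by
    have : ∀ x ∈ (Icc (0:ℝ) L)ᶜ, g x = h x := by
      intro x hx
      simp only [g, Set.indicator_of_notMem (mem_compl_iff _ _ |>.mp hx), sub_zero,
        abs_of_nonneg (hnonneg x)]
    rw [setIntegral_congr_fun hIcc.compl this, hcompl]
  have hinner : ∀ x ∈ Icc (0:ℝ) L, g x = |h x - V / L| := by
    intro x hx
    simp only [g, Set.indicator_of_mem hx]
  -- bound the inner part by 2 ∫ (h - V/L)₊ ≤ 2 L (h c - V/L)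
  have habs : ∀ x, |h x - V / L| = 2 * max (h x - V / L) 0 - (h x - V / L) := by
    intro x
    rcases le_total (h x - V / L) 0 with hx | hx
    · rw [abs_of_nonpos hx, max_eq_right hx]; ring
    · rw [abs_of_nonneg hx, max_eq_left hx]; ring
  have hposint : IntegrableOn (fun x => max (h x - V / L) 0) (Icc (0:ℝ) L) :=
    (hint.integrableOn.sub (integrableOn_const (by simp [Real.volume_Icc]))).pos_part
  have hsubint : IntegrableOn (fun x => h x - V / L) (Icc (0:ℝ) L) :=
    hint.integrableOn.sub (integrableOn_const (by simp [Real.volume_Icc]))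
  have hzero : (∫ x in Icc (0:ℝ) L, (h x - V / L)) = 0 := by
    rw [integral_sub hint.integrableOn (integrableOn_const (by simp [Real.volume_Icc]))]
    rw [hvolL, setIntegral_const, Real.volume_real_Icc_of_le hL.le, smul_eq_mul,
      sub_zero]
    field_simp
    ring
  have hVLc : V / L ≤ h c := by
    rw [div_le_iff₀ hL]; linarith
  have hposbound : (∫ x in Icc (0:ℝ) L, max (h x - V / L) 0)
      ≤ ∫ x in Icc (0:ℝ) L, (fun _ => h c - V / L) x := by
    refine setIntegral_mono_on hposint (integrableOn_const (by simp [Real.volume_Icc])) hIcc ?_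
    intro x hx
    exact max_le (by linarith [hcmax' x hx]) (by linarith)
  have hposbound' : (∫ x in Icc (0:ℝ) L, max (h x - V / L) 0) ≤ L * (h c - V / L) := by
    rwa [setIntegral_const, Real.volume_real_Icc_of_le hL.le, smul_eq_mul,
      sub_zero] at hposbound
  have hinnerval : (∫ x in Icc (0:ℝ) L, g x)
      = 2 * ∫ x in Icc (0:ℝ) L, max (h x - V / L) 0 := by
    rw [setIntegral_congr_fun hIcc hinner]
    have : (∫ x in Icc (0:ℝ) L, |h x - V / L|)
        = ∫ x in Icc (0:ℝ) L, (2 * max (h x - V / L) 0 - (h x - V / L)) := by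
      exact setIntegral_congr_fun hIcc fun x _ => habs x
    rw [this, integral_sub (hposint.const_mul 2) hsubint, hzero, sub_zero,
      integral_const_mul]
  have hfinal : (∫ x, g x) ≤ 2 * L * (h c - V / L) := by
    rw [hsplit, houter, add_zero, hinnerval]
    nlinarith
  have hgnonneg : 0 ≤ ∫ x, g x := integral_nonneg fun x => abs_nonneg _
  rw [ge_iff_le]
  rw [div_le_iff₀ hL] at hVLc
  have hq : (1 / L) * (∫ x, g x) ≤ 2 * h c - 2 * V / L := by
    rw [div_mul_eq_mul_div, div_le_iff₀ hL]
    have : (2 * h c - 2 * V / L) * L = 2 * L * (h c - V / L) := by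
      field_simp
    rw [this, one_mul]
    exact hfinal
  linarith
end

section
/- Let f : [a,b] → ℝ be given by f(x) = y₀ + √(r² − (x−x₀)²) (the upper arc of a circle of radius r centered at (x₀,y₀)), with [a,b] contained in (x₀−r, x₀+r). Then ∫_a^b f(x) dx − (b−a)(f(a)+f(b))/2 ≥ (b−a)³/(12 r). -/
open intervalIntegral


lemma arc_aux_concave (r x₀ : ℝ) (hr : 0 < r) :
    ConcaveOn ℝ (Set.Ioo (x₀ - r) (x₀ + r))
      (fun x => Real.sqrt (r ^ 2 - (x - x₀) ^ 2) + (x - x₀) ^ 2 / (2 * r)) := by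
  have hIo : interior (Set.Ioo (x₀ - r) (x₀ + r)) = Set.Ioo (x₀ - r) (x₀ + r) :=
    (isOpen_Ioo).interior_eq
  have hpos : ∀ x ∈ Set.Ioo (x₀ - r) (x₀ + r), 0 < r ^ 2 - (x - x₀) ^ 2 := by
    rintro x ⟨h1, h2⟩; nlinarith
  apply concaveOn_of_hasDerivWithinAt2_nonpos (convex_Ioo _ _)
    (f' := fun x => -(x - x₀) / Real.sqrt (r ^ 2 - (x - x₀) ^ 2) + (x - x₀) / r)
    (f'' := fun x => -r ^ 2 / ((r ^ 2 - (x - x₀) ^ 2) * Real.sqrt (r ^ 2 - (x - x₀) ^ 2)) + 1 / r)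
  · fun_prop
  · intro x hx
    rw [hIo] at hx ⊢
    apply HasDerivAt.hasDerivWithinAt
    have hu : HasDerivAt (fun x : ℝ => r ^ 2 - (x - x₀) ^ 2) (-(2 * (x - x₀))) x := by
      simpa using (((hasDerivAt_id x).sub_const x₀).pow 2).const_sub (r ^ 2)
    have hs : HasDerivAt (fun x : ℝ => Real.sqrt (r ^ 2 - (x - x₀) ^ 2))
        (-(2 * (x - x₀)) / (2 * Real.sqrt (r ^ 2 - (x - x₀) ^ 2))) x := by
      have := (Real.hasDerivAt_sqrt (ne_of_gt (hpos x hx))).comp x hu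
      refine this.congr_deriv ?_
      field_simp
    have hq : HasDerivAt (fun x : ℝ => (x - x₀) ^ 2 / (2 * r)) ((x - x₀) / r) x := by
      have := (((hasDerivAt_id x).sub_const x₀).pow 2).div_const (2 * r)
      refine this.congr_deriv ?_
      simp only [id]; field_simp; ring
    have hsne : Real.sqrt (r ^ 2 - (x - x₀) ^ 2) ≠ 0 :=
      ne_of_gt (Real.sqrt_pos.mpr (hpos x hx))
    refine (hs.add hq).congr_deriv ?_
    field_simp
  · intro x hx
    rw [hIo] at hx ⊢
    apply HasDerivAt.hasDerivWithinAt
    have hup : 0 < r ^ 2 - (x - x₀) ^ 2 := hpos x hx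
    have hsp : 0 < Real.sqrt (r ^ 2 - (x - x₀) ^ 2) := Real.sqrt_pos.mpr hup
    have hu : HasDerivAt (fun x : ℝ => r ^ 2 - (x - x₀) ^ 2) (-(2 * (x - x₀))) x := by
      simpa using (((hasDerivAt_id x).sub_const x₀).pow 2).const_sub (r ^ 2)
    have hs : HasDerivAt (fun x : ℝ => Real.sqrt (r ^ 2 - (x - x₀) ^ 2))
        (-(x - x₀) / Real.sqrt (r ^ 2 - (x - x₀) ^ 2)) x := by
      have := (Real.hasDerivAt_sqrt (ne_of_gt hup)).comp x hu
      refine this.congr_deriv ?_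
      field_simp
    have hn : HasDerivAt (fun x : ℝ => -(x - x₀)) (-1 : ℝ) x := by
      exact ((hasDerivAt_id x).sub_const x₀).neg
    have hdiv := hn.div hs (ne_of_gt hsp)
    have hlin : HasDerivAt (fun x : ℝ => (x - x₀) / r) (1 / r) x := by
      simpa using ((hasDerivAt_id x).sub_const x₀).div_const r
    have hsq : Real.sqrt (r ^ 2 - (x - x₀) ^ 2) ^ 2 = r ^ 2 - (x - x₀) ^ 2 :=
      Real.sq_sqrt hup.le
    refine (hdiv.add hlin).congr_deriv ?_
    have : (-1 * Real.sqrt (r ^ 2 - (x - x₀) ^ 2) -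
        -(x - x₀) * (-(x - x₀) / Real.sqrt (r ^ 2 - (x - x₀) ^ 2))) /
        Real.sqrt (r ^ 2 - (x - x₀) ^ 2) ^ 2
        = -r ^ 2 / ((r ^ 2 - (x - x₀) ^ 2) * Real.sqrt (r ^ 2 - (x - x₀) ^ 2)) := by
      rw [hsq]
      field_simp
      nlinarith [hsq]
    rw [this]
  · intro x hx
    rw [hIo] at hx
    have hup : 0 < r ^ 2 - (x - x₀) ^ 2 := hpos x hx
    have hsp : 0 < Real.sqrt (r ^ 2 - (x - x₀) ^ 2) := Real.sqrt_pos.mpr hup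
    have hsle : Real.sqrt (r ^ 2 - (x - x₀) ^ 2) ≤ r :=
      (Real.sqrt_le_sqrt (by nlinarith)).trans_eq (Real.sqrt_sq hr.le)
    have h3 : 1 / r ≤ r ^ 2 / ((r ^ 2 - (x - x₀) ^ 2) * Real.sqrt (r ^ 2 - (x - x₀) ^ 2)) := by
      rw [div_le_div_iff₀ hr (by positivity)]
      nlinarith
    have hneg : -r ^ 2 / ((r ^ 2 - (x - x₀) ^ 2) * Real.sqrt (r ^ 2 - (x - x₀) ^ 2))
        = -(r ^ 2 / ((r ^ 2 - (x - x₀) ^ 2) * Real.sqrt (r ^ 2 - (x - x₀) ^ 2))) := neg_div _ _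
    rw [hneg]
    linarith

-- polynomial integral helper
lemma arc_aux_poly_int (a b c0 c1 c2 : ℝ) :
    ∫ x in a..b, (c0 + c1 * x + c2 * x ^ 2)
      = c0 * (b - a) + c1 * (b ^ 2 - a ^ 2) / 2 + c2 * (b ^ 3 - a ^ 3) / 3 := by
  have h : ∀ x ∈ Set.uIcc a b,
      HasDerivAt (fun x : ℝ => c0 * x + c1 * x ^ 2 / 2 + c2 * x ^ 3 / 3)
        (c0 + c1 * x + c2 * x ^ 2) x := by
    intro x _
    have h1 : HasDerivAt (fun x : ℝ => c0 * x) c0 x := by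
      simpa using (hasDerivAt_id x).const_mul c0
    have h2 : HasDerivAt (fun x : ℝ => c1 * x ^ 2 / 2) (c1 * x) x := by
      have := (((hasDerivAt_id x).pow 2).const_mul c1).div_const 2
      refine this.congr_deriv ?_; simp only [id]; field_simp; ring
    have h3 : HasDerivAt (fun x : ℝ => c2 * x ^ 3 / 3) (c2 * x ^ 2) x := by
      have := (((hasDerivAt_id x).pow 3).const_mul c2).div_const 3
      refine this.congr_deriv ?_; simp only [id]; field_simp; ring
    exact (h1.add h2).add h3
  rw [intervalIntegral.integral_eq_sub_of_hasDerivAt h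
    ((Continuous.intervalIntegrable (by continuity) a b))]
  ring

lemma arc_aux_int (a b y₀ A B r : ℝ) (hab : a < b) (hr : 0 < r) :
    (∫ x in a..b,
        (((b - x) * (y₀ + A) + (x - a) * (y₀ + B)) / (b - a) + (x - a) * (b - x) / (2 * r)))
      = (b - a) * ((y₀ + A) + (y₀ + B)) / 2 + (b - a) ^ 3 / (12 * r) := by
  have hne : b - a ≠ 0 := sub_ne_zero.mpr hab.ne'
  have hfun : (fun x : ℝ =>
        ((b - x) * (y₀ + A) + (x - a) * (y₀ + B)) / (b - a) + (x - a) * (b - x) / (2 * r))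
      = fun x : ℝ => ((b * (y₀ + A) - a * (y₀ + B)) / (b - a) - a * b / (2 * r))
          + ((B - A) / (b - a) + (a + b) / (2 * r)) * x + (-(1 / (2 * r))) * x ^ 2 :=
    funext fun x => by field_simp; ring
  rw [hfun, arc_aux_poly_int]
  field_simp
  ring



/-- **Circular arc versus its chord.**  For `f x = y₀ + √(r² - (x - x₀)²)`
(the upper arc of the circle of radius `r` centered at `(x₀, y₀)`) and
`[a,b] ⊆ (x₀ - r, x₀ + r)`,
`∫_a^b f - (b-a)(f a + f b)/2 ≥ (b-a)³/(12 r)`. -/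
theorem arc_above_chord
    (r x₀ y₀ a b : ℝ) (hr : 0 < r) (hab : a < b)
    (ha : |a - x₀| < r) (hb : |b - x₀| < r) :
    (∫ x in a..b, (y₀ + Real.sqrt (r ^ 2 - (x - x₀) ^ 2)))
        - (b - a) * ((y₀ + Real.sqrt (r ^ 2 - (a - x₀) ^ 2))
            + (y₀ + Real.sqrt (r ^ 2 - (b - x₀) ^ 2))) / 2
      ≥ (b - a) ^ 3 / (12 * r) := by
  have hba : (0:ℝ) < b - a := sub_pos.mpr hab
  obtain ⟨ha1, ha2⟩ := abs_lt.mp ha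
  obtain ⟨hb1, hb2⟩ := abs_lt.mp hb
  have haD : a ∈ Set.Ioo (x₀ - r) (x₀ + r) := ⟨by linarith, by linarith⟩
  have hbD : b ∈ Set.Ioo (x₀ - r) (x₀ + r) := ⟨by linarith, by linarith⟩
  have hconc := arc_aux_concave r x₀ hr
  set A := Real.sqrt (r ^ 2 - (a - x₀) ^ 2) with hA
  set B := Real.sqrt (r ^ 2 - (b - x₀) ^ 2) with hB
  -- pointwise bound
  have key : ∀ x ∈ Set.Icc a b,
      ((b - x) * (y₀ + A) + (x - a) * (y₀ + B)) / (b - a) + (x - a) * (b - x) / (2 * r)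
        ≤ y₀ + Real.sqrt (r ^ 2 - (x - x₀) ^ 2) := by
    intro x hx
    have hl1 : 0 ≤ (b - x) / (b - a) := div_nonneg (by linarith [hx.2]) hba.le
    have hl2 : 0 ≤ (x - a) / (b - a) := div_nonneg (by linarith [hx.1]) hba.le
    have hsum : (b - x) / (b - a) + (x - a) / (b - a) = 1 := by field_simp; ring
    have h := hconc.2 haD hbD hl1 hl2 hsum
    simp only [smul_eq_mul] at h
    have hxc : (b - x) / (b - a) * a + (x - a) / (b - a) * b = x := by
      field_simp; ring
    rw [hxc] at h
    have hmA := mul_add ((b - x) / (b - a)) A ((a - x₀) ^ 2 / (2 * r))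
    have hmB := mul_add ((x - a) / (b - a)) B ((b - x₀) ^ 2 / (2 * r))
    have hid : (b - x) / (b - a) * ((a - x₀) ^ 2 / (2 * r))
        + (x - a) / (b - a) * ((b - x₀) ^ 2 / (2 * r)) - (x - x₀) ^ 2 / (2 * r)
        = (x - a) * (b - x) / (2 * r) := by
      field_simp; ring
    have e1 : ((b - x) * (y₀ + A) + (x - a) * (y₀ + B)) / (b - a)
        = (b - x) / (b - a) * A + (x - a) / (b - a) * B
          + ((b - x) / (b - a) + (x - a) / (b - a)) * y₀ := by
      field_simp; ring
    rw [e1, hsum, one_mul]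
    linarith [h, hmA, hmB, hid]
  -- integration
  have hFcont : Continuous (fun x => y₀ + Real.sqrt (r ^ 2 - (x - x₀) ^ 2)) :=
    continuous_const.add (Real.continuous_sqrt.comp (by continuity))
  have hlcont : Continuous (fun x : ℝ =>
      ((b - x) * (y₀ + A) + (x - a) * (y₀ + B)) / (b - a) + (x - a) * (b - x) / (2 * r)) := by
    apply Continuous.add
    · exact (Continuous.div_const (by continuity) _)
    · exact (Continuous.div_const (by continuity) _)
  have hmono : (∫ x in a..b,
        (((b - x) * (y₀ + A) + (x - a) * (y₀ + B)) / (b - a) + (x - a) * (b - x) / (2 * r)))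
      ≤ ∫ x in a..b, (y₀ + Real.sqrt (r ^ 2 - (x - x₀) ^ 2)) := by
    apply intervalIntegral.integral_mono_on hab.le
      (hlcont.intervalIntegrable a b) (hFcont.intervalIntegrable a b)
    exact key
  rw [arc_aux_int a b y₀ A B r hab hr] at hmono
  linarith
end
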